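/- Let m ≥ 2 and n ≥ 1, let c, d ∈ ℝ^n with c_i > 0 for all i ∈ {1,…,n}, and let C be the generalized Cauchy tensor with generating vectors c, d. Then for every x ∈ ℝ^n, C x^m = ∫_0^1 ( ∑_{i=1}^n t^{c_i − 1/m} d_i x_i )^m dt. -/

import Mathlib

open Finset

/-- `A x^m = ∑_{i_1,…,i_m} a_{i_1⋯i_m} x_{i_1}⋯x_{i_m}` for an order `m` dimension `n` tensor. -/
noncomputable def tApply (m n : ℕ) (a : (Fin m → Fin n) → ℝ) (x : Fin n → ℝ) : ℝ :=
  ∑ i : Fin m → Fin n, a i * ∏ j, x (i j)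

/-- An (even order) tensor is positive semi-definite if `A x^m ≥ 0` for all `x`. -/
def IsPSD (m n : ℕ) (a : (Fin m → Fin n) → ℝ) : Prop :=
  ∀ x : Fin n → ℝ, 0 ≤ tApply m n a x

/-- Generalized Cauchy tensor with generating vectors `c, d`:
entries `d_{i_1}⋯d_{i_m} / (c_{i_1}+⋯+c_{i_m})`. -/
noncomputable def genCauchy (m n : ℕ) (c d : Fin n → ℝ) : (Fin m → Fin n) → ℝ :=
  fun i => (∏ j, d (i j)) / (∑ j, c (i j))

/-- The integral representation of a generalized Cauchy tensor with positive generating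
vector `c`: `C x^m = ∫_0^1 (∑_i t^{c_i - 1/m} d_i x_i)^m dt`. -/
theorem stmt_1 (m n : ℕ) (hm : 2 ≤ m) (hn : 1 ≤ n)
    (c d : Fin n → ℝ) (hc : ∀ i : Fin n, 0 < c i) (x : Fin n → ℝ) :
    tApply m n (genCauchy m n c d) x
      = ∫ t in (0:ℝ)..1, (∑ i : Fin n, t ^ (c i - 1 / (m : ℝ)) * d i * x i) ^ m := by
  have hm0 : (m : ℝ) ≠ 0 := by
    exact_mod_cast (by omega : m ≠ 0)
  have hS : ∀ p : Fin m → Fin n, 0 < ∑ j, c (p j) := by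
    intro p
    refine Finset.sum_pos (fun j _ => hc (p j)) ?_
    exact ⟨⟨0, by omega⟩, Finset.mem_univ _⟩
  have hsum : ∀ p : Fin m → Fin n,
      ∑ j, (c (p j) - 1 / (m : ℝ)) = (∑ j, c (p j)) - 1 := by
    intro p
    rw [Finset.sum_sub_distrib, Finset.sum_const, Finset.card_univ, Fintype.card_fin,
      nsmul_eq_mul, mul_one_div, div_self hm0]
  -- rewrite the integrand on (0,1]
  have key : ∀ t ∈ Set.uIoc (0:ℝ) 1,
      (∑ i : Fin n, t ^ (c i - 1 / (m : ℝ)) * d i * x i) ^ m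
        = ∑ p : Fin m → Fin n,
            t ^ ((∑ j, c (p j)) - 1) * ((∏ j, d (p j)) * ∏ j, x (p j)) := by
    intro t ht
    rw [Set.uIoc_of_le (by norm_num : (0:ℝ) ≤ 1)] at ht
    have ht0 : 0 < t := ht.1
    rw [Finset.sum_pow' Finset.univ
      (fun i : Fin n => t ^ (c i - 1 / (m : ℝ)) * d i * x i) m,
      Fintype.piFinset_univ]
    refine Finset.sum_congr rfl fun p _ => ?_
    rw [← hsum p, Real.rpow_sum_of_pos ht0]
    rw [Finset.prod_mul_distrib, Finset.prod_mul_distrib, mul_assoc]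
  have hint : ∀ p : Fin m → Fin n,
      IntervalIntegrable
        (fun t : ℝ => t ^ ((∑ j, c (p j)) - 1) * ((∏ j, d (p j)) * ∏ j, x (p j)))
        MeasureTheory.volume 0 1 := by
    intro p
    exact (intervalIntegral.intervalIntegrable_rpow'
      (by linarith [hS p] : (-1:ℝ) < (∑ j, c (p j)) - 1)).mul_const _
  rw [intervalIntegral.integral_congr_ae
      (MeasureTheory.ae_of_all _ fun t ht => key t ht),
    intervalIntegral.integral_finset_sum fun p _ => hint p]
  unfold tApply genCauchy
  refine Finset.sum_congr rfl fun p _ => ?_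
  rw [intervalIntegral.integral_mul_const, integral_rpow (Or.inl (by linarith [hS p]))]
  have : (∑ j, c (p j)) - 1 + 1 = ∑ j, c (p j) := by ring
  rw [this, Real.one_rpow, Real.zero_rpow (ne_of_gt (hS p))]
  field_simp
  rw [sub_zero, mul_one]
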